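/- Let G(V,E) be a DAG, y ∈ ℝ^V, w > 0, and let G', y' be the reduction graph as above. Then x* ∈ I_G minimizes ‖x − y‖_{w,∞} over I_G if and only if some complete labeling of G' extending y' and restricting to x* on V is an inf-minimizer of the partially labeled DAG (G', y'). -/

import Mathlib

open scoped ENNReal

/-- The objective of the Lipschitz-learning instance on the reduction graph `G'`:
the maximum gradient over all edges, valued in `ℝ≥0∞`.  Zero-length original edges
contribute `0` when non-decreasing and `⊤` otherwise; the auxiliary edges
`(u_L, u)` and `(u, u_R)` have length `1/w(u)`. -/
noncomputable def reductionObj {V : Type} (E : Set (V × V)) (w : V → ℝ)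
    (z : V ⊕ V ⊕ V → ℝ) : ℝ≥0∞ :=
  (⨆ e ∈ E, if z (Sum.inl e.1) ≤ z (Sum.inl e.2) then 0 else (⊤ : ℝ≥0∞)) ⊔
  (⨆ u : V, ENNReal.ofReal ((z (Sum.inr (Sum.inl u)) - z (Sum.inl u)) * w u)) ⊔
  (⨆ u : V, ENNReal.ofReal ((z (Sum.inl u) - z (Sum.inr (Sum.inr u))) * w u))

section Aux

variable {V : Type} [Fintype V] [Nonempty V]

lemma auxPart_eq (w : V → ℝ) (hw : ∀ u, 0 < w u) (x y : V → ℝ) :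
    (⨆ u : V, ENNReal.ofReal ((y u - x u) * w u)) ⊔
      (⨆ u : V, ENNReal.ofReal ((x u - y u) * w u)) =
    ENNReal.ofReal
      (Finset.univ.sup' Finset.univ_nonempty (fun u : V => w u * |x u - y u|)) := by
  apply le_antisymm
  · apply sup_le
    · refine iSup_le fun u => ENNReal.ofReal_le_ofReal ?_
      have h1 : -(x u - y u) ≤ |x u - y u| := neg_le_abs _
      have h2 := (hw u).le
      refine le_trans ?_ (Finset.le_sup' _ (Finset.mem_univ u))
      nlinarith
    · refine iSup_le fun u => ENNReal.ofReal_le_ofReal ?_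
      have h1 : (x u - y u) ≤ |x u - y u| := le_abs_self _
      have h2 := (hw u).le
      refine le_trans ?_ (Finset.le_sup' _ (Finset.mem_univ u))
      nlinarith
  · obtain ⟨u₀, -, hu⟩ := Finset.exists_mem_eq_sup' Finset.univ_nonempty
      (fun u : V => w u * |x u - y u|)
    rw [hu]
    rcases abs_cases (x u₀ - y u₀) with ⟨ha, _⟩ | ⟨ha, _⟩
    · refine le_trans ?_ le_sup_right
      refine le_trans ?_ (le_iSup _ u₀)
      apply ENNReal.ofReal_le_ofReal
      rw [ha]; ring_nf; exact le_rfl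
    · refine le_trans ?_ le_sup_left
      refine le_trans ?_ (le_iSup _ u₀)
      apply ENNReal.ofReal_le_ofReal
      rw [ha]; ring_nf; exact le_rfl

lemma obj_eq (E : Set (V × V)) (w : V → ℝ) (hw : ∀ u, 0 < w u) (y : V → ℝ)
    (z' : V ⊕ V ⊕ V → ℝ) (h1 : ∀ u, z' (Sum.inr (Sum.inl u)) = y u)
    (h2 : ∀ u, z' (Sum.inr (Sum.inr u)) = y u) :
    reductionObj E w z' =
      (⨆ e ∈ E, if z' (Sum.inl e.1) ≤ z' (Sum.inl e.2) then 0 else (⊤ : ℝ≥0∞)) ⊔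
      ENNReal.ofReal (Finset.univ.sup' Finset.univ_nonempty
        (fun u : V => w u * |z' (Sum.inl u) - y u|)) := by
  unfold reductionObj
  rw [sup_assoc]
  congr 1
  simp only [h1, h2]
  exact auxPart_eq w hw (fun u => z' (Sum.inl u)) y

lemma edge_zero (E : Set (V × V)) (z' : V ⊕ V ⊕ V → ℝ)
    (h : ∀ e ∈ E, z' (Sum.inl e.1) ≤ z' (Sum.inl e.2)) :
    (⨆ e ∈ E, if z' (Sum.inl e.1) ≤ z' (Sum.inl e.2) then 0 else (⊤ : ℝ≥0∞)) = 0 := by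
  refine le_antisymm ?_ zero_le
  exact iSup₂_le fun e he => by rw [if_pos (h e he)]

lemma edge_top (E : Set (V × V)) (z' : V ⊕ V ⊕ V → ℝ)
    (h : ¬ ∀ e ∈ E, z' (Sum.inl e.1) ≤ z' (Sum.inl e.2)) :
    (⨆ e ∈ E, if z' (Sum.inl e.1) ≤ z' (Sum.inl e.2) then 0 else (⊤ : ℝ≥0∞)) = ⊤ := by
  push_neg at h
  obtain ⟨e, he, hlt⟩ := h
  rw [eq_top_iff]
  calc (⊤ : ℝ≥0∞) = if z' (Sum.inl e.1) ≤ z' (Sum.inl e.2) then 0 else ⊤ := by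
        rw [if_neg (not_le.2 hlt)]
    _ ≤ _ := le_iSup₂ (f := fun e (_ : e ∈ E) =>
        if z' (Sum.inl e.1) ≤ z' (Sum.inl e.2) then 0 else (⊤ : ℝ≥0∞)) e he

lemma exists_feasible (E : Set (V × V))
    (hacyc : ∀ v : V, ¬ Relation.TransGen (fun a b => (a, b) ∈ E) v v) :
    ∃ z : V → ℝ, ∀ e ∈ E, z e.1 ≤ z e.2 := by
  classical
  refine ⟨fun v => ((Finset.univ.filter
    (fun u => Relation.TransGen (fun a b => (a, b) ∈ E) u v)).card : ℝ), fun e he => ?_⟩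
  have hsub : (Finset.univ.filter
      (fun u => Relation.TransGen (fun a b => (a, b) ∈ E) u e.1)) ⊆
      (Finset.univ.filter
      (fun u => Relation.TransGen (fun a b => (a, b) ∈ E) u e.2)) := by
    intro u hu
    simp only [Finset.mem_filter, Finset.mem_univ, true_and] at hu ⊢
    exact hu.tail he
  dsimp only
  exact_mod_cast Finset.card_le_card hsub

end Aux

/-- `x*` minimizes `‖x − y‖_{w,∞}` over the isotonic set `I_G` if and only if some
complete labeling of the reduction graph `G'` extending `y'` and restricting to `x*`
on `V` is an inf-minimizer of the partially labeled DAG `(G', y')`. -/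
theorem linf_isotonic_iff_inf_minimizer (V : Type) [Fintype V] [Nonempty V]
    (E : Set (V × V))
    (hacyc : ∀ v : V, ¬ Relation.TransGen (fun a b => (a, b) ∈ E) v v)
    (y : V → ℝ) (w : V → ℝ) (hw : ∀ u, 0 < w u) (xstar : V → ℝ) :
    ((∀ e ∈ E, xstar e.1 ≤ xstar e.2) ∧
      ∀ z : V → ℝ, (∀ e ∈ E, z e.1 ≤ z e.2) →
        Finset.univ.sup' Finset.univ_nonempty (fun u : V => w u * |xstar u - y u|) ≤
          Finset.univ.sup' Finset.univ_nonempty (fun u : V => w u * |z u - y u|)) ↔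
    (∃ zc : V ⊕ V ⊕ V → ℝ,
      (∀ u, zc (Sum.inr (Sum.inl u)) = y u) ∧
      (∀ u, zc (Sum.inr (Sum.inr u)) = y u) ∧
      (∀ u, zc (Sum.inl u) = xstar u) ∧
      ∀ z' : V ⊕ V ⊕ V → ℝ, (∀ u, z' (Sum.inr (Sum.inl u)) = y u) →
        (∀ u, z' (Sum.inr (Sum.inr u)) = y u) →
          reductionObj E w zc ≤ reductionObj E w z') := by
  classical
  have Mnn : ∀ x : V → ℝ, 0 ≤ Finset.univ.sup' Finset.univ_nonempty
      (fun u : V => w u * |x u - y u|) := by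
    intro x
    refine le_trans ?_ (Finset.le_sup' _ (Finset.mem_univ (Classical.arbitrary V)))
    exact mul_nonneg (hw _).le (abs_nonneg _)
  constructor
  · rintro ⟨hfeas, hmin⟩
    refine ⟨Sum.elim xstar (Sum.elim y y), fun u => rfl, fun u => rfl, fun u => rfl,
      fun z' h1 h2 => ?_⟩
    rw [obj_eq E w hw y _ (fun u => rfl) (fun u => rfl),
      obj_eq E w hw y z' h1 h2,
      edge_zero E (Sum.elim xstar (Sum.elim y y)) (fun e he => by simpa using hfeas e he)]
    by_cases hz : ∀ e ∈ E, z' (Sum.inl e.1) ≤ z' (Sum.inl e.2)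
    · rw [edge_zero E z' hz]
      simp only [Sum.elim_inl]
      exact sup_le_sup_left (ENNReal.ofReal_le_ofReal
        (hmin (fun u => z' (Sum.inl u)) hz)) 0
    · rw [edge_top E z' hz]
      simp
  · rintro ⟨zc, h1, h2, h3, hmin⟩
    have hzc1 : ∀ u, zc (Sum.inl u) = xstar u := h3
    -- a feasible labeling exists
    obtain ⟨zf, hzf⟩ := exists_feasible E hacyc
    have objzc : ∀ z : V → ℝ, reductionObj E w zc ≤
        reductionObj E w (Sum.elim z (Sum.elim y y)) := fun z =>
      hmin _ (fun u => rfl) (fun u => rfl)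
    have objfin : reductionObj E w zc < ⊤ := by
      refine lt_of_le_of_lt (objzc zf) ?_
      rw [obj_eq E w hw y _ (fun u => rfl) (fun u => rfl),
        edge_zero E (Sum.elim zf (Sum.elim y y)) (fun e he => by simpa using hzf e he)]
      simp [lt_top_iff_ne_top, ENNReal.ofReal_ne_top]
    have hfeas : ∀ e ∈ E, xstar e.1 ≤ xstar e.2 := by
      by_contra hcon
      have : reductionObj E w zc = ⊤ := by
        rw [obj_eq E w hw y zc h1 h2, edge_top E zc (by simpa [hzc1] using hcon)]
        simp
      rw [this] at objfin
      exact lt_irrefl _ objfin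
    refine ⟨hfeas, fun z hz => ?_⟩
    have hle := objzc z
    rw [obj_eq E w hw y zc h1 h2,
      obj_eq E w hw y _ (fun u => rfl) (fun u => rfl),
      edge_zero E zc (fun e he => by rw [hzc1, hzc1]; exact hfeas e he),
      edge_zero E (Sum.elim z (Sum.elim y y)) (fun e he => by simpa using hz e he)] at hle
    rw [sup_eq_right.2 zero_le, sup_eq_right.2 zero_le] at hle
    simp only [Sum.elim_inl, hzc1] at hle
    exact (ENNReal.ofReal_le_ofReal_iff (Mnn z)).1 hle
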